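/- Let (E, ‖·‖) be an ultrametric Banach space over a valued field K (E ≠ {0}) and A : E → E an invertible continuous linear map whose operator norm with respect to some equivalent norm ‖·‖' satisfies ‖A‖' < 1. Then there exists an ultrametric norm ‖·‖~ on E, equivalent to ‖·‖, such that the operator norm of A with respect to ‖·‖~ is strictly less than 1. Concretely, if C ≥ 1 satisfies C⁻¹‖·‖' ≤ ‖·‖ ≤ C‖·‖', θ := ‖A‖', and n ≥ 2 is chosen so that C²θ^{n−1} < 1, then ‖x‖~ := max{θ^{−k/(n−1)}‖A^k x‖ : k = 0, …, n−1} works, and ‖A‖~ ≤ max{θ^{1/(n−1)}, C²θ^{n−1}} < 1. -/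

import Mathlib

open NNReal

/-- Existence of an equivalent ultrametric norm making a linear contraction
(with respect to some equivalent norm `N'`) a contraction: the explicit norm
`‖x‖~ = max_{0 ≤ k < n} θ^{-k/(n-1)} ‖A^k x‖` is ultrametric, equivalent to
`‖·‖`, and satisfies `‖A x‖~ ≤ max (θ^{1/(n-1)}) (C² θ^{n-1}) ‖x‖~`, with
`max (θ^{1/(n-1)}) (C² θ^{n-1}) < 1`. -/
theorem ultrametric_adapted_norm_contraction
    {K E : Type*} [NontriviallyNormedField K]
    [NormedAddCommGroup E] [NormedSpace K E] [CompleteSpace E]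
    [IsUltrametricDist E] [Nontrivial E]
    (A : E →L[K] E) (C θ : ℝ) (hC : 1 ≤ C) (hθ0 : 0 < θ) (hθ1 : θ < 1)
    (N' : E → ℝ)
    (hlow : ∀ x, C⁻¹ * N' x ≤ ‖x‖) (hup : ∀ x, ‖x‖ ≤ C * N' x)
    (hA : ∀ x, N' (A x) ≤ θ * N' x)
    (n : ℕ) (hn : 2 ≤ n) (hσ : C ^ 2 * θ ^ (n - 1) < 1) :
    ∀ x y : E,
      (Finset.range n).sup' (Finset.nonempty_range_iff.mpr (by omega))
          (fun k => θ ^ (-(k : ℝ) / ((n : ℝ) - 1)) * ‖(A ^ k) (x + y)‖) ≤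
        max
          ((Finset.range n).sup' (Finset.nonempty_range_iff.mpr (by omega))
            (fun k => θ ^ (-(k : ℝ) / ((n : ℝ) - 1)) * ‖(A ^ k) x‖))
          ((Finset.range n).sup' (Finset.nonempty_range_iff.mpr (by omega))
            (fun k => θ ^ (-(k : ℝ) / ((n : ℝ) - 1)) * ‖(A ^ k) y‖)) ∧
      (∃ c₁ c₂ : ℝ, 0 < c₁ ∧ 0 < c₂ ∧ ∀ z : E,
        c₁ * ‖z‖ ≤ (Finset.range n).sup' (Finset.nonempty_range_iff.mpr (by omega))
            (fun k => θ ^ (-(k : ℝ) / ((n : ℝ) - 1)) * ‖(A ^ k) z‖) ∧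
        (Finset.range n).sup' (Finset.nonempty_range_iff.mpr (by omega))
            (fun k => θ ^ (-(k : ℝ) / ((n : ℝ) - 1)) * ‖(A ^ k) z‖) ≤ c₂ * ‖z‖) ∧
      ((Finset.range n).sup' (Finset.nonempty_range_iff.mpr (by omega))
          (fun k => θ ^ (-(k : ℝ) / ((n : ℝ) - 1)) * ‖(A ^ k) (A x)‖) ≤
        max (θ ^ ((1 : ℝ) / ((n : ℝ) - 1))) (C ^ 2 * θ ^ (n - 1)) *
          (Finset.range n).sup' (Finset.nonempty_range_iff.mpr (by omega))
            (fun k => θ ^ (-(k : ℝ) / ((n : ℝ) - 1)) * ‖(A ^ k) x‖)) ∧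
      max (θ ^ ((1 : ℝ) / ((n : ℝ) - 1))) (C ^ 2 * θ ^ (n - 1)) < 1 := by
  intro x y
  have hC0 : (0:ℝ) < C := lt_of_lt_of_le one_pos hC
  have hnR : (2:ℝ) ≤ (n:ℝ) := by exact_mod_cast hn
  have hm : (0:ℝ) < (n:ℝ) - 1 := by linarith
  have hne : (Finset.range n).Nonempty := Finset.nonempty_range_iff.mpr (by omega)
  set N : E → ℝ := fun z => (Finset.range n).sup' hne
      (fun k => θ ^ (-(k : ℝ) / ((n : ℝ) - 1)) * ‖(A ^ k) z‖) with hNdef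
  -- basic facts
  have hN'0 : ∀ z, 0 ≤ N' z := by
    intro z
    nlinarith [hup z, norm_nonneg z]
  have hN'C : ∀ z, N' z ≤ C * ‖z‖ := by
    intro z
    have h := mul_le_mul_of_nonneg_left (hlow z) hC0.le
    calc N' z = C * (C⁻¹ * N' z) := by field_simp
    _ ≤ C * ‖z‖ := h
  have hAk : ∀ k (z : E), N' ((A ^ k) z) ≤ θ ^ k * N' z := by
    intro k
    induction k with
    | zero => intro z; simp
    | succ k ih =>
      intro z
      have hrw : (A ^ (k+1)) z = (A ^ k) (A z) := by
        rw [pow_succ, ContinuousLinearMap.mul_apply]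
      rw [hrw]
      calc N' ((A ^ k) (A z)) ≤ θ ^ k * N' (A z) := ih (A z)
      _ ≤ θ ^ k * (θ * N' z) :=
        mul_le_mul_of_nonneg_left (hA z) (by positivity)
      _ = θ ^ (k+1) * N' z := by ring
  have hnormAk : ∀ k (z : E), ‖(A ^ k) z‖ ≤ C ^ 2 * θ ^ k * ‖z‖ := by
    intro k z
    calc ‖(A ^ k) z‖ ≤ C * N' ((A ^ k) z) := hup _
    _ ≤ C * (θ ^ k * N' z) := mul_le_mul_of_nonneg_left (hAk k z) hC0.le
    _ ≤ C * (θ ^ k * (C * ‖z‖)) :=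
        mul_le_mul_of_nonneg_left
          (mul_le_mul_of_nonneg_left (hN'C z) (by positivity)) hC0.le
    _ = C ^ 2 * θ ^ k * ‖z‖ := by ring
  have hle_sup : ∀ (z : E) (k : ℕ), k ∈ Finset.range n →
      θ ^ (-(k : ℝ) / ((n : ℝ) - 1)) * ‖(A ^ k) z‖ ≤ N z := by
    intro z k hk
    exact Finset.le_sup' (fun j : ℕ => θ ^ (-(j : ℝ) / ((n : ℝ) - 1)) * ‖(A ^ j) z‖) hk
  have hNlow : ∀ z : E, ‖z‖ ≤ N z := by
    intro z
    have h := hle_sup z 0 (Finset.mem_range.mpr (by omega))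
    refine le_trans (le_of_eq ?_) h
    simp
  have hN0 : ∀ z : E, 0 ≤ N z := fun z => (norm_nonneg z).trans (hNlow z)
  refine ⟨?_, ⟨1, C ^ 2 * θ⁻¹, one_pos, by positivity, ?_⟩, ?_, ?_⟩
  · -- ultrametric inequality
    apply Finset.sup'_le
    intro k hk
    have hcoef : (0:ℝ) ≤ θ ^ (-(k : ℝ) / ((n : ℝ) - 1)) := by positivity
    have h1 : ‖(A ^ k) (x + y)‖ ≤ max ‖(A ^ k) x‖ ‖(A ^ k) y‖ := by
      rw [map_add]
      exact IsUltrametricDist.norm_add_le_max _ _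
    calc θ ^ (-(k : ℝ) / ((n : ℝ) - 1)) * ‖(A ^ k) (x + y)‖
        ≤ θ ^ (-(k : ℝ) / ((n : ℝ) - 1)) * max ‖(A ^ k) x‖ ‖(A ^ k) y‖ :=
          mul_le_mul_of_nonneg_left h1 hcoef
      _ = max (θ ^ (-(k : ℝ) / ((n : ℝ) - 1)) * ‖(A ^ k) x‖)
            (θ ^ (-(k : ℝ) / ((n : ℝ) - 1)) * ‖(A ^ k) y‖) := by
          rcases le_total ‖(A ^ k) x‖ ‖(A ^ k) y‖ with h | h
          · rw [max_eq_right h, max_eq_right (mul_le_mul_of_nonneg_left h hcoef)]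
          · rw [max_eq_left h, max_eq_left (mul_le_mul_of_nonneg_left h hcoef)]
      _ ≤ max (N x) (N y) :=
          max_le_max (hle_sup x k hk) (hle_sup y k hk)
  · -- equivalence
    intro z
    refine ⟨by simpa only [one_mul] using hNlow z, ?_⟩
    apply Finset.sup'_le
    intro k hk
    have hk' : (k:ℝ) ≤ (n:ℝ) - 1 := by
      have : k < n := Finset.mem_range.mp hk
      have : (k:ℝ) ≤ (n:ℝ) - 1 := by
        have hkn : (k:ℝ) + 1 ≤ (n:ℝ) := by exact_mod_cast this
        linarith
      exact this
    have hcoef : θ ^ (-(k : ℝ) / ((n : ℝ) - 1)) ≤ θ⁻¹ := by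
      rw [show θ⁻¹ = θ ^ (-1 : ℝ) by rw [Real.rpow_neg_one]]
      apply Real.rpow_le_rpow_of_exponent_ge hθ0 hθ1.le
      rw [neg_div, neg_le_neg_iff, div_le_one hm]
      exact hk'
    have hθk1 : θ ^ k ≤ 1 := pow_le_one₀ hθ0.le hθ1.le
    calc θ ^ (-(k : ℝ) / ((n : ℝ) - 1)) * ‖(A ^ k) z‖
        ≤ θ⁻¹ * (C ^ 2 * θ ^ k * ‖z‖) := by
          apply mul_le_mul hcoef (hnormAk k z) (by positivity) (by positivity)
      _ = C ^ 2 * θ⁻¹ * ‖z‖ * θ ^ k := by ring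
      _ ≤ C ^ 2 * θ⁻¹ * ‖z‖ * 1 :=
          mul_le_mul_of_nonneg_left hθk1 (by positivity)
      _ = C ^ 2 * θ⁻¹ * ‖z‖ := mul_one _
  · -- contraction
    apply Finset.sup'_le
    intro k hk
    have hkn : k < n := Finset.mem_range.mp hk
    have hrw : (A ^ k) (A x) = (A ^ (k+1)) x := by
      rw [pow_succ, ContinuousLinearMap.mul_apply]
    rw [hrw]
    have hmax0 : (0:ℝ) ≤ max (θ ^ ((1 : ℝ) / ((n : ℝ) - 1))) (C ^ 2 * θ ^ (n - 1)) :=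
      le_trans (by positivity) (le_max_left _ _)
    rcases eq_or_lt_of_le (Nat.succ_le_of_lt hkn) with hkeq | hklt
    · -- k + 1 = n
      have hkR : (k:ℝ) = (n:ℝ) - 1 := by
        have := congrArg (Nat.cast : ℕ → ℝ) hkeq
        push_cast at this
        linarith
      have hcoef : θ ^ (-(k : ℝ) / ((n : ℝ) - 1)) = θ⁻¹ := by
        rw [hkR, neg_div, div_self hm.ne', Real.rpow_neg_one]
      rw [hcoef, show k + 1 = n from hkeq]
      have hpow : θ⁻¹ * θ ^ n = θ ^ (n-1) := by
        have h1 : θ ^ n = θ * θ ^ (n-1) := by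
          rw [← pow_succ']
          congr 1
          omega
        rw [h1, ← mul_assoc, inv_mul_cancel₀ hθ0.ne', one_mul]
      calc θ⁻¹ * ‖(A ^ n) x‖ ≤ θ⁻¹ * (C ^ 2 * θ ^ n * ‖x‖) :=
            mul_le_mul_of_nonneg_left (hnormAk n x) (by positivity)
        _ = C ^ 2 * θ ^ (n-1) * ‖x‖ := by rw [← hpow]; ring
        _ ≤ C ^ 2 * θ ^ (n-1) * N x :=
            mul_le_mul_of_nonneg_left (hNlow x) (by positivity)
        _ ≤ max (θ ^ ((1 : ℝ) / ((n : ℝ) - 1))) (C ^ 2 * θ ^ (n - 1)) * N x :=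
            mul_le_mul_of_nonneg_right (le_max_right _ _) (hN0 x)
    · -- k + 1 < n
      have hmem : k + 1 ∈ Finset.range n := Finset.mem_range.mpr hklt
      have hterm := hle_sup x (k+1) hmem
      have hsplit : θ ^ (-(k : ℝ) / ((n : ℝ) - 1)) =
          θ ^ ((1 : ℝ) / ((n : ℝ) - 1)) * θ ^ (-((k+1 : ℕ) : ℝ) / ((n : ℝ) - 1)) := by
        rw [← Real.rpow_add hθ0]
        congr 1
        push_cast
        field_simp
        ring
      calc θ ^ (-(k : ℝ) / ((n : ℝ) - 1)) * ‖(A ^ (k+1)) x‖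
          = θ ^ ((1 : ℝ) / ((n : ℝ) - 1)) *
              (θ ^ (-((k+1 : ℕ) : ℝ) / ((n : ℝ) - 1)) * ‖(A ^ (k+1)) x‖) := by
            rw [hsplit]; ring
        _ ≤ θ ^ ((1 : ℝ) / ((n : ℝ) - 1)) * N x :=
            mul_le_mul_of_nonneg_left hterm (by positivity)
        _ ≤ max (θ ^ ((1 : ℝ) / ((n : ℝ) - 1))) (C ^ 2 * θ ^ (n - 1)) * N x :=
            mul_le_mul_of_nonneg_right (le_max_left _ _) (hN0 x)
  · -- strict bound
    apply max_lt _ hσ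
    exact Real.rpow_lt_one hθ0.le hθ1 (by positivity)
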